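/- If a graph G has a universal vertex u (adjacent to all other vertices) and G − u is not empty and G is not a path on at most 3 vertices, then φ(G) ≥ φ(G − u) + 1. -/

import Mathlib

/-- A b-coloring of `G` with `k` colors: a proper coloring such that every color class
contains a vertex adjacent to at least one vertex of every other color class. -/
def IsBColoring {V : Type*} (G : SimpleGraph V) (k : ℕ) (c : V → Fin k) : Prop :=
  (∀ u v, G.Adj u v → c u ≠ c v) ∧
  ∀ i : Fin k, ∃ v, c v = i ∧ ∀ j : Fin k, j ≠ i → ∃ w, G.Adj v w ∧ c w = j

/-- The b-chromatic number of `G`: the largest `k` admitting a b-coloring. -/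
noncomputable def bChromatic {V : Type*} (G : SimpleGraph V) : ℕ :=
  sSup {k | ∃ c : V → Fin k, IsBColoring G k c}

/-- Every finite graph admits a b-coloring (take a surjective proper coloring with the
minimum number of colors). -/
lemma exists_isBColoring {W : Type*} [Fintype W] (H : SimpleGraph W) :
    ∃ k, ∃ c : W → Fin k, IsBColoring H k c := by
  classical
  set T : Set ℕ := {k | ∃ c : W → Fin k,
    (∀ a b, H.Adj a b → c a ≠ c b) ∧ Function.Surjective c} with hT
  have hcard : Fintype.card W ∈ T := by
    refine ⟨Fintype.equivFin W, fun a b hab h => H.ne_of_adj hab ?_,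
      (Fintype.equivFin W).surjective⟩
    exact (Fintype.equivFin W).injective h
  have hTne : T.Nonempty := ⟨_, hcard⟩
  obtain ⟨c, hc, hsurj⟩ := Nat.sInf_mem hTne
  refine ⟨sInf T, c, hc, fun i => ?_⟩
  by_contra hcon
  push_neg at hcon
  -- every vertex of class i misses some color in its neighborhood
  have hmiss : ∀ v, c v = i → ∃ j : Fin (sInf T), j ≠ i ∧ ∀ w, H.Adj v w → c w ≠ j := by
    intro v hv
    obtain ⟨j, hj, hw⟩ := hcon v hv
    refine ⟨j, hj, fun w hadj hcw => ?_⟩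
    exact hw w hadj hcw
  -- recolor class i
  let f : W → Fin (sInf T) := fun v =>
    if h : c v = i then Classical.choose (hmiss v h) else c v
  have hfne : ∀ v, f v ≠ i := by
    intro v
    by_cases h : c v = i
    · simp only [f, dif_pos h]; exact (Classical.choose_spec (hmiss v h)).1
    · simp only [f, dif_neg h]; exact h
  have hfprop : ∀ a b, H.Adj a b → f a ≠ f b := by
    intro a b hab
    by_cases ha : c a = i <;> by_cases hb : c b = i
    · exact absurd (ha.trans hb.symm) (hc a b hab)
    · simp only [f, dif_pos ha, dif_neg hb]
      intro h
      exact (Classical.choose_spec (hmiss a ha)).2 b hab h.symm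
    · simp only [f, dif_neg ha, dif_pos hb]
      intro h
      exact (Classical.choose_spec (hmiss b hb)).2 a hab.symm h
    · simp only [f, dif_neg ha, dif_neg hb]; exact hc a b hab
  have hfval : ∀ v, c v ≠ i → f v = c v := by
    intro v h; simp only [f, dif_neg h]
  obtain ⟨m, hm⟩ : ∃ m, sInf T = m + 1 := ⟨(sInf T) - 1, by have := i.pos; omega⟩
  let i' : Fin (m + 1) := Fin.cast hm i
  let e := finSuccAboveEquiv i'
  have hcastne : ∀ v, Fin.cast hm (f v) ≠ i' := by
    intro v h
    exact hfne v ((Fin.cast_injective hm) h)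
  let g : W → Fin m := fun v => e.symm ⟨Fin.cast hm (f v), hcastne v⟩
  have hgmem : m ∈ T := by
    refine ⟨g, fun a b hab h => hfprop a b hab ?_, fun y => ?_⟩
    · have h2 := congrArg e h
      simp only [g, Equiv.apply_symm_apply] at h2
      have h3 : Fin.cast hm (f a) = Fin.cast hm (f b) := congrArg Subtype.val h2
      exact (Fin.cast_injective hm) h3
    · have hne1 : Fin.cast hm.symm (e y).1 ≠ i := by
        intro h
        apply (e y).2
        have hval := congrArg Fin.val h
        simp only [Fin.coe_cast] at hval
        exact Fin.ext (by simp only [i', Fin.coe_cast]; exact hval)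
      obtain ⟨v, hv⟩ := hsurj (Fin.cast hm.symm (e y).1)
      have hcvne : c v ≠ i := hv ▸ hne1
      have hfv : Fin.cast hm (f v) = (e y).1 := by
        rw [hfval v hcvne, hv]; ext; simp
      refine ⟨v, ?_⟩
      simp only [g]
      rw [show (⟨Fin.cast hm (f v), hcastne v⟩ : {x // x ≠ i'}) = e y from Subtype.ext hfv,
        Equiv.symm_apply_apply]
  have := Nat.sInf_le hgmem
  omega

lemma bcoloring_bddAbove {W : Type*} [Fintype W] (H : SimpleGraph W) :
    BddAbove {k | ∃ c : W → Fin k, IsBColoring H k c} := by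
  classical
  refine ⟨Fintype.card W, fun k hk => ?_⟩
  obtain ⟨c, _, hb⟩ := hk
  have hinj : Function.Injective (fun i : Fin k => Classical.choose (hb i)) := by
    intro i j h
    have h2 : c (Classical.choose (hb i)) = c (Classical.choose (hb j)) := congrArg c h
    rw [(Classical.choose_spec (hb i)).1, (Classical.choose_spec (hb j)).1] at h2
    exact h2
  calc k = Fintype.card (Fin k) := (Fintype.card_fin k).symm
    _ ≤ Fintype.card W := Fintype.card_le_of_injective _ hinj

/-- If $G$ has a universal vertex $u$, $G - u$ is nonempty, and $G$ is not a path on at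
most 3 vertices, then $φ(G) ≥ φ(G - u) + 1$. -/
theorem bChromatic_of_universal_vertex {V : Type*} [Fintype V] [DecidableEq V]
    (G : SimpleGraph V) (u : V) (huniv : ∀ w : V, w ≠ u → G.Adj u w)
    (hne : ∃ w : V, w ≠ u)
    (hnp : ¬ ∃ m : ℕ, m ≤ 3 ∧ Nonempty (G ≃g SimpleGraph.pathGraph m)) :
    bChromatic (G.induce {v : V | v ≠ u}) + 1 ≤ bChromatic G := by
  classical
  set G' := G.induce {v : V | v ≠ u} with hG'
  set S' : Set ℕ := {k | ∃ c : {v : V | v ≠ u} → Fin k, IsBColoring G' k c} with hS'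
  have hS'ne : S'.Nonempty := by
    obtain ⟨k, c, hc⟩ := exists_isBColoring G'
    exact ⟨k, c, hc⟩
  set k := bChromatic G' with hk
  have hk' : k ∈ S' := Nat.sSup_mem hS'ne (bcoloring_bddAbove G')
  obtain ⟨c', hprop', hb'⟩ := hk'
  -- build a (k+1)-coloring of G
  let c : V → Fin (k + 1) := fun v =>
    if h : v = u then Fin.last k else (c' ⟨v, h⟩).castSucc
  have hcu : c u = Fin.last k := by simp [c]
  have hcv : ∀ (v : V) (h : v ≠ u), c v = (c' ⟨v, h⟩).castSucc := by
    intro v h; simp [c, h]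
  have hadj' : ∀ (a b : V) (ha : a ≠ u) (hb : b ≠ u), G.Adj a b →
      G'.Adj ⟨a, ha⟩ ⟨b, hb⟩ := by
    intro a b ha hb hab
    exact hab
  have hbcol : IsBColoring G (k + 1) c := by
    constructor
    · intro a b hab
      by_cases ha : a = u
      · have hb : b ≠ u := fun h => G.irrefl (v := u) (by rwa [ha, h] at hab)
        rw [ha, hcu, hcv b hb]
        exact (Fin.castSucc_lt_last _).ne'
      · by_cases hb : b = u
        · subst hb
          rw [hcu, hcv a ha]
          exact (Fin.castSucc_lt_last _).ne
        · rw [hcv a ha, hcv b hb]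
          exact fun h => hprop' _ _ (hadj' a b ha hb hab) (Fin.castSucc_injective _ h)
    · intro i
      by_cases hi : i = Fin.last k
      · subst hi
        refine ⟨u, hcu, fun j hj => ?_⟩
        obtain ⟨j', hj'⟩ := (Fin.exists_castSucc_eq).2 hj
        obtain ⟨v', hv', -⟩ := hb' j'
        refine ⟨v'.1, huniv v'.1 v'.2, ?_⟩
        rw [hcv v'.1 v'.2, Subtype.coe_eta, hv', hj']
      · obtain ⟨i', hi'⟩ := (Fin.exists_castSucc_eq).2 hi
        obtain ⟨v', hv', hdom⟩ := hb' i'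
        refine ⟨v'.1, by rw [hcv v'.1 v'.2, Subtype.coe_eta, hv', hi'], fun j hj => ?_⟩
        by_cases hjl : j = Fin.last k
        · exact ⟨u, (huniv v'.1 v'.2).symm, hjl ▸ hcu⟩
        · obtain ⟨j', hj'⟩ := (Fin.exists_castSucc_eq).2 hjl
          have hji : j' ≠ i' := by
            intro h; exact hj (by rw [← hj', h, hi'])
          obtain ⟨w', hadjw, hw'⟩ := hdom j' hji
          refine ⟨w'.1, hadjw, ?_⟩
          rw [hcv w'.1 w'.2, Subtype.coe_eta, hw', hj']
  have hmem : k + 1 ∈ {k | ∃ c : V → Fin k, IsBColoring G k c} := ⟨c, hbcol⟩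
  exact le_csSup (bcoloring_bddAbove G) hmem
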